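/- Let R be an equivalence relation on a finite set U. A subset X ⊆ U intersects each equivalence class of R in exactly one element if and only if X is minimal (with respect to set inclusion) in the family {Y ⊆ U : R*(Y) = U} of subsets whose upper approximation equals U. -/
import Mathlib


/-- The upper approximation of a set `X` with respect to an equivalence relation `s`:
the union of the equivalence classes meeting `X`. -/
def upperApprox {α : Type*} (s : Setoid α) (X : Set α) : Set α :=
  {z | ∃ x ∈ X, s.r x z}

/-- `X ⊆ U` intersects each equivalence class of `R` in exactly one element
iff `X` is minimal in the family of subsets whose upper approximation equals `U`. -/
theorem transversal_iff_minimal_upperApprox_univ {α : Type*} [Fintype α]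
    (s : Setoid α) (X : Set α) :
    (∀ y : α, ∃! x, x ∈ X ∧ s.r x y) ↔
      (upperApprox s X = Set.univ ∧
        ∀ Y : Set α, upperApprox s Y = Set.univ → Y ⊆ X → Y = X) := by
  constructor
  · intro h
    constructor
    · ext z
      simp only [Set.mem_univ, iff_true, upperApprox, Set.mem_setOf_eq]
      obtain ⟨x, ⟨hx, hr⟩, _⟩ := h z
      exact ⟨x, hx, hr⟩
    · intro Y hY hYX
      apply Set.Subset.antisymm hYX
      intro x hx
      have : x ∈ upperApprox s Y := by rw [hY]; trivial
      obtain ⟨y, hyY, hr⟩ := this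
      obtain ⟨w, _, hu⟩ := h x
      have h1 : y = w := hu y ⟨hYX hyY, hr⟩
      have h2 : x = w := hu x ⟨hx, s.refl x⟩
      rw [h2, ← h1]; exact hyY
  · rintro ⟨hU, hmin⟩ y
    have hy : y ∈ upperApprox s X := by rw [hU]; trivial
    obtain ⟨x, hxX, hr⟩ := hy
    refine ⟨x, ⟨hxX, hr⟩, ?_⟩
    rintro x' ⟨hx'X, hr'⟩
    by_contra hne
    have hY : upperApprox s (X \ {x}) = Set.univ := by
      ext z
      simp only [Set.mem_univ, iff_true]
      have : z ∈ upperApprox s X := by rw [hU]; trivial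
      obtain ⟨w, hwX, hwz⟩ := this
      by_cases hw : w = x
      · exact ⟨x', ⟨hx'X, hne⟩, s.trans (s.trans hr' (s.symm hr)) (hw ▸ hwz)⟩
      · exact ⟨w, ⟨hwX, hw⟩, hwz⟩
    have := hmin _ hY (Set.diff_subset)
    rw [← this] at hxX
    exact hxX.2 rfl
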